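/- Let P ⊂ R^d be a polytope, C ⊂ R^d a closed full-dimensional convex cone with polar cone C°, and suppose every extreme point v of P is exposed by some y in the interior of C, meaning argmax_{x ∈ P} ⟨y, x⟩ = {v}. Then the extreme points of P + C° are exactly the extreme points of P. -/

import Mathlib

open Pointwise

open RealInnerProductSpace

theorem stmt7 (d : ℕ) (V : Finset (EuclideanSpace ℝ (Fin d)))
    (C : Set (EuclideanSpace ℝ (Fin d)))
    (hCclosed : IsClosed C) (hCconv : Convex ℝ C)
    (hCcone : ∀ y ∈ C, ∀ r : ℝ, 0 ≤ r → r • y ∈ C)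
    (hfull : (interior C).Nonempty)
    (P : Set (EuclideanSpace ℝ (Fin d)))
    (hP : P = convexHull ℝ (V : Set (EuclideanSpace ℝ (Fin d))))
    (Cpol : Set (EuclideanSpace ℝ (Fin d)))
    (hCpol : Cpol = {k | ∀ y ∈ C, ⟪y, k⟫ ≤ (0:ℝ)})
    (hexp : ∀ v ∈ Set.extremePoints ℝ P, ∃ y ∈ interior C,
      {x ∈ P | ∀ z ∈ P, ⟪y, z⟫ ≤ ⟪y, x⟫} = {v}) :
    Set.extremePoints ℝ (P + Cpol) = Set.extremePoints ℝ P := by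
  have h0pol : (0 : EuclideanSpace ℝ (Fin d)) ∈ Cpol := by
    rw [hCpol]; intro y hy; simp
  have hmemP : ∀ x ∈ P, x ∈ P + Cpol := fun x hx =>
    ⟨x, hx, 0, h0pol, add_zero x⟩
  have hstrict : ∀ y ∈ interior C, ∀ k ∈ Cpol, k ≠ 0 → ⟪y, k⟫ < 0 := by
    intro y hy k hk hk0
    rw [hCpol] at hk
    have hle : ⟪y, k⟫ ≤ 0 := hk y (interior_subset hy)
    rcases lt_or_eq_of_le hle with h | h
    · exact h
    · exfalso
      rcases Metric.isOpen_iff.mp isOpen_interior y hy with ⟨ε, hε, hball⟩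
      have hk' : 0 < ‖k‖ := norm_pos_iff.mpr hk0
      set δ := ε / (2 * ‖k‖) with hδ
      have hδpos : 0 < δ := by positivity
      have hmem : y + δ • k ∈ C := by
        apply interior_subset; apply hball
        rw [Metric.mem_ball, dist_eq_norm]
        have hnorm : ‖y + δ • k - y‖ = δ * ‖k‖ := by
          simp [norm_smul, abs_of_pos hδpos]
        rw [hnorm, hδ, div_mul_eq_mul_div, div_lt_iff₀ (by positivity)]
        nlinarith
      have hkey := hk (y + δ • k) hmem
      rw [inner_add_left, real_inner_smul_left, ← h] at hkey
      have hpos : (0:ℝ) < ⟪k, k⟫ := by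
        rw [real_inner_self_eq_norm_sq]; exact pow_pos hk' 2
      nlinarith [mul_pos hδpos hpos]
  have hscale : ∀ k ∈ Cpol, (2:ℝ) • k ∈ Cpol := by
    intro k hk; rw [hCpol] at *; intro y hy
    rw [real_inner_smul_right]; nlinarith [hk y hy]
  ext v
  constructor
  · intro hv
    obtain ⟨hvmem, hext⟩ := hv
    obtain ⟨p, hp, k, hk, hpk⟩ := hvmem
    have h1 : p ∈ P + Cpol := ⟨p, hp, 0, h0pol, add_zero p⟩
    have h2 : p + (2:ℝ) • k ∈ P + Cpol := ⟨p, hp, (2:ℝ) • k, hscale k hk, rfl⟩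
    have hseg : v ∈ openSegment ℝ p (p + (2:ℝ) • k) := by
      refine ⟨1/2, 1/2, by norm_num, by norm_num, by norm_num, ?_⟩
      rw [← hpk]; module
    have hp1 := hext h1 h2 hseg
    have hvp : v ∈ P := hp1 ▸ hp
    exact ⟨hvp, fun a ha b hb hseg' => hext (hmemP a ha) (hmemP b hb) hseg'⟩
  · intro hv
    obtain ⟨y, hy, hface⟩ := hexp v hv
    have hvface : v ∈ {x ∈ P | ∀ z ∈ P, ⟪y, z⟫ ≤ ⟪y, x⟫} := by
      rw [hface]; rfl
    obtain ⟨hvP, hvmax⟩ := hvface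
    refine ⟨hmemP v hvP, ?_⟩
    rintro a ⟨p₁, hp₁, k₁, hk₁, rfl⟩ b ⟨p₂, hp₂, k₂, hk₂, rfl⟩ ⟨t, u, ht, hu, htu, hv'⟩
    have hfv : ⟪y, v⟫ = t * (⟪y, p₁⟫ + ⟪y, k₁⟫) + u * (⟪y, p₂⟫ + ⟪y, k₂⟫) := by
      rw [← hv']
      simp only [inner_add_right, real_inner_smul_right]
    have hk₁le : ⟪y, k₁⟫ ≤ 0 := by
      rw [hCpol] at hk₁; exact hk₁ y (interior_subset hy)
    have hk₂le : ⟪y, k₂⟫ ≤ 0 := by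
      rw [hCpol] at hk₂; exact hk₂ y (interior_subset hy)
    have hp₁le : ⟪y, p₁⟫ ≤ ⟪y, v⟫ := hvmax p₁ hp₁
    have hp₂le : ⟪y, p₂⟫ ≤ ⟪y, v⟫ := hvmax p₂ hp₂
    have hfa : ⟪y, p₁⟫ + ⟪y, k₁⟫ ≤ ⟪y, v⟫ := by linarith
    have hfb : ⟪y, p₂⟫ + ⟪y, k₂⟫ ≤ ⟪y, v⟫ := by linarith
    have hsum : t * ⟪y, v⟫ + u * ⟪y, v⟫ = ⟪y, v⟫ := by rw [← add_mul, htu, one_mul]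
    have ha : ⟪y, p₁⟫ + ⟪y, k₁⟫ = ⟪y, v⟫ := by
      rcases lt_or_eq_of_le hfa with h | h
      · exfalso
        have h1 := mul_lt_mul_of_pos_left h ht
        have h2 := mul_le_mul_of_nonneg_left hfb hu.le
        linarith
      · exact h
    have hb : ⟪y, p₂⟫ + ⟪y, k₂⟫ = ⟪y, v⟫ := by
      rcases lt_or_eq_of_le hfb with h | h
      · exfalso
        have h1 := mul_lt_mul_of_pos_left h hu
        have h2 := mul_le_mul_of_nonneg_left hfa ht.le
        linarith
      · exact h
    have hk₁0 : k₁ = 0 := by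
      by_contra h
      have := hstrict y hy k₁ hk₁ h
      linarith
    have hk₂0 : k₂ = 0 := by
      by_contra h
      have := hstrict y hy k₂ hk₂ h
      linarith
    have hp₁v : p₁ = v := by
      have hmem : p₁ ∈ ({v} : Set (EuclideanSpace ℝ (Fin d))) := by
        rw [← hface]
        refine ⟨hp₁, fun z hz => ?_⟩
        have : ⟪y, p₁⟫ = ⟪y, v⟫ := by rw [hk₁0] at ha; simpa using ha
        rw [this]; exact hvmax z hz
      exact hmem
    have hp₂v : p₂ = v := by
      have hmem : p₂ ∈ ({v} : Set (EuclideanSpace ℝ (Fin d))) := by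
        rw [← hface]
        refine ⟨hp₂, fun z hz => ?_⟩
        have : ⟪y, p₂⟫ = ⟪y, v⟫ := by rw [hk₂0] at hb; simpa using hb
        rw [this]; exact hvmax z hz
      exact hmem
    show p₁ + k₁ = v
    rw [hk₁0, hp₁v, add_zero]
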